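/- Let μ be an index such that C is disjoint from X_μ and |C ∩ (⋃_{i=0}^{n} X_{μ+i})| ≤ n for all 0 ≤ n ≤ t-1 (indices mod t), where |C| = t-1 and t ≤ k. Then there exists a sequence (p_1, ..., p_{k-|X_μ|}) of nonnegative integers with p_1 ∈ {0,1} and p_i ∈ {p_{i-1}, p_{i-1}+1} such that x^{μ+i}_{p_i} ∉ C for all i; hence the block X_μ ∪ {x^{μ+i}_{p_i}} of 𝔽(k,t) is disjoint from C. -/

import Mathlib

/-- Size of the part `X n` in the construction `𝔽(k,t)`. -/
def Fsize (k t n : ℕ) : ℕ := if n ≤ (t - 1) / 2 then k - t / 2 else k - (t - 1) / 2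

/-- The part `X n`, realized as pairs `(n, p)` with `p < |X n|`. -/
def Xpart (k t n : ℕ) : Finset (ℕ × ℕ) := (Finset.range (Fsize k t n)).image (fun p => (n, p))

/-- The slow-growth condition on the sequence `p`: `p 0 = 0` and each step stays or goes up by 1. -/
def slow (p : ℕ → ℕ) : Prop := p 0 = 0 ∧ ∀ m, 1 ≤ m → p m = p (m - 1) ∨ p m = p (m - 1) + 1

/-- The block of `𝔽(k,t)` determined by the base part `n` and sequence `p`. -/
def Fblock (k t n : ℕ) (p : ℕ → ℕ) : Finset (ℕ × ℕ) :=
  Xpart k t n ∪ (Finset.Icc 1 (k - Fsize k t n)).image (fun i => ((n + i) % t, p i))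

/-- The family `𝔽(k,t)`. -/
def Ffam (k t : ℕ) : Set (Finset (ℕ × ℕ)) :=
  {B | ∃ n < t, ∃ p : ℕ → ℕ, slow p ∧ B = Fblock k t n p}

/-- `C` is a blocking set of `𝔽(k,t)`. -/
def IsBlocking (k t : ℕ) (C : Finset (ℕ × ℕ)) : Prop := ∀ B ∈ Ffam k t, (C ∩ B).Nonempty

/-- The transversal number of `𝔽(k,t)`. -/
noncomputable def tau (k t : ℕ) : ℕ := sInf {m | ∃ C : Finset (ℕ × ℕ), C.card = m ∧ IsBlocking k t C}

def avoidQ (t μ : ℕ) (C : Finset (ℕ × ℕ)) : ℕ → Finset ℕ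
  | 0 => {0}
  | i + 1 =>
    (avoidQ t μ C i ∪ (avoidQ t μ C i).image (· + 1)).filter
      (fun q => ((μ + (i + 1)) % t, q) ∉ C)

lemma avoidQ_le (t μ : ℕ) (C : Finset (ℕ × ℕ)) : ∀ i, ∀ q ∈ avoidQ t μ C i, q ≤ i := by
  intro i
  induction i with
  | zero => simp [avoidQ]
  | succ i ih =>
    intro q hq
    simp only [avoidQ, Finset.mem_filter, Finset.mem_union, Finset.mem_image] at hq
    rcases hq.1 with h | ⟨a, ha, rfl⟩
    · exact Nat.le_succ_of_le (ih q h)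
    · exact Nat.succ_le_succ (ih a ha)

lemma avoidQ_path (t μ : ℕ) (C : Finset (ℕ × ℕ)) :
    ∀ i, ∀ q ∈ avoidQ t μ C i, ∃ p : ℕ → ℕ, p 0 = 0 ∧
      (∀ m, 1 ≤ m → p m = p (m - 1) ∨ p m = p (m - 1) + 1) ∧
      (∀ m, 1 ≤ m → m ≤ i → ((μ + m) % t, p m) ∉ C) ∧
      (∀ m, i ≤ m → p m = q) := by
  intro i
  induction i with
  | zero =>
    intro q hq
    simp only [avoidQ, Finset.mem_singleton] at hq
    subst hq
    exact ⟨fun _ => 0, rfl, fun m _ => Or.inl rfl,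
      fun m h1 h2 => absurd h2 (by omega), fun _ _ => rfl⟩
  | succ i ih =>
    intro q hq
    simp only [avoidQ, Finset.mem_filter, Finset.mem_union, Finset.mem_image] at hq
    obtain ⟨hmem, hnot⟩ := hq
    obtain ⟨q', hq', hqq'⟩ : ∃ q' ∈ avoidQ t μ C i, q = q' ∨ q = q' + 1 := by
      rcases hmem with h | ⟨a, ha, h⟩
      · exact ⟨q, h, Or.inl rfl⟩
      · exact ⟨a, ha, Or.inr h.symm⟩
    obtain ⟨p, hp0, hstep, havoid, hconst⟩ := ih q' hq'
    refine ⟨fun m => if m ≤ i then p m else q, by simp [hp0], ?_, ?_, ?_⟩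
    · intro m hm
      by_cases h1 : m ≤ i
      · have : m - 1 ≤ i := by omega
        simpa [h1, this] using hstep m hm
      · by_cases h2 : m = i + 1
        · subst h2
          have : p i = q' := hconst i le_rfl
          simp only [if_neg h1, show i + 1 - 1 = i from rfl, if_pos le_rfl, this]
          omega
        · have h3 : ¬ (m - 1 ≤ i) := by omega
          simp [h1, h3]
    · intro m h1 h2
      by_cases h : m ≤ i
      · simpa [h] using havoid m h1 h
      · have : m = i + 1 := by omega
        subst this
        simpa [h] using hnot
    · intro m hm
      have : ¬ (m ≤ i) := by omega
      simp [this]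

/-- Existence of a block of `𝔽(k,t)` avoiding the small set `C`. -/
theorem exists_avoiding_block (k t : ℕ) (ht : 0 < t) (htk : t ≤ k)
    (C : Finset (ℕ × ℕ)) (hC : C.card = t - 1)
    (μ : ℕ) (hμ : μ < t)
    (hdisj : Disjoint C (Xpart k t μ))
    (hle : ∀ n ≤ t - 1,
      (C ∩ (Finset.range (n + 1)).biUnion (fun i => Xpart k t ((μ + i) % t))).card ≤ n) :
    ∃ p : ℕ → ℕ, slow p ∧
      (∀ i, 1 ≤ i → i ≤ k - Fsize k t μ → ((μ + i) % t, p i) ∉ C) ∧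
      Disjoint (Fblock k t μ p) C := by
  have hM : k - Fsize k t μ ≤ t - 1 := by
    simp only [Fsize]; split <;> omega
  -- the row needed at column i fits into that part
  have hrow : ∀ i, 1 ≤ i → i ≤ k - Fsize k t μ → i < Fsize k t ((μ + i) % t) := by
    intro i h1 h2
    have hmod : (μ + i) % t = μ + i ∨ ((μ + i) % t = μ + i - t ∧ t ≤ μ + i) := by
      rcases lt_or_ge (μ + i) t with h | h
      · exact Or.inl (Nat.mod_eq_of_lt h)
      · refine Or.inr ⟨?_, h⟩
        rw [Nat.mod_eq_sub_mod h, Nat.mod_eq_of_lt (by omega)]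
    simp only [Fsize] at h2 ⊢
    split at h2 <;> split <;> omega
  -- distinct columns
  have hcol : ∀ j i : ℕ, j < i → i ≤ t - 1 → (μ + j) % t ≠ (μ + i) % t := by
    intro j i hji hit h
    have hd : t ∣ (μ + i) - (μ + j) := (Nat.modEq_iff_dvd' (by omega)).mp h
    have := Nat.le_of_dvd (by omega) hd
    omega
  -- disjointness of distinct parts
  have hXd : ∀ n m : ℕ, n ≠ m → Disjoint (Xpart k t n) (Xpart k t m) := by
    intro n m hnm
    rw [Finset.disjoint_left]
    intro x hx hx'
    simp only [Xpart, Finset.mem_image, Finset.mem_range] at hx hx'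
    obtain ⟨a, -, rfl⟩ := hx
    obtain ⟨b, -, hb⟩ := hx'
    exact hnm (congrArg Prod.fst hb).symm
  -- counting: Q stays nonempty
  have key : ∀ i, i ≤ k - Fsize k t μ →
      i + 1 ≤ (avoidQ t μ C i).card +
        (C ∩ (Finset.range (i + 1)).biUnion (fun j => Xpart k t ((μ + j) % t))).card := by
    intro i
    induction i with
    | zero => intro _; simp [avoidQ]
    | succ i ih =>
      intro hi1
      have ih' := ih (by omega)
      have hBi := hle i (by omega)
      have hQpos : 0 < (avoidQ t μ C i).card := by omega
      obtain ⟨m, hm⟩ := Finset.card_pos.mp hQpos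
      set S := avoidQ t μ C i ∪ (avoidQ t μ C i).image (· + 1) with hS
      -- S is bigger than Q i
      have hmax : (avoidQ t μ C i).max' ⟨m, hm⟩ + 1 ∉ avoidQ t μ C i := by
        intro h
        have := Finset.le_max' _ _ h
        omega
      have hcardS : (avoidQ t μ C i).card + 1 ≤ S.card := by
        have hsub : insert ((avoidQ t μ C i).max' ⟨m, hm⟩ + 1) (avoidQ t μ C i) ⊆ S := by
          intro x hx
          rcases Finset.mem_insert.mp hx with rfl | hx
          · exact Finset.mem_union_right _
              (Finset.mem_image.mpr ⟨_, Finset.max'_mem _ _, rfl⟩)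
          · exact Finset.mem_union_left _ hx
        calc (avoidQ t μ C i).card + 1
            = (insert ((avoidQ t μ C i).max' ⟨m, hm⟩ + 1) (avoidQ t μ C i)).card :=
              (Finset.card_insert_of_notMem hmax).symm
          _ ≤ S.card := Finset.card_le_card hsub
      -- partition of S
      have hpart : (avoidQ t μ C (i + 1)).card +
          (S.filter (fun q => ((μ + (i + 1)) % t, q) ∈ C)).card = S.card := by
        have : avoidQ t μ C (i + 1) = S.filter (fun q => ((μ + (i + 1)) % t, q) ∉ C) := rfl
        rw [this]
        simpa [not_not] using Finset.card_filter_add_card_filter_not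
          (s := S) (p := fun q => ((μ + (i + 1)) % t, q) ∉ C)
      -- blocked rows inject into C ∩ Xpart
      have hR : (S.filter (fun q => ((μ + (i + 1)) % t, q) ∈ C)).card ≤
          (C ∩ Xpart k t ((μ + (i + 1)) % t)).card := by
        apply Finset.card_le_card_of_injOn (fun q => ((μ + (i + 1)) % t, q))
        · intro q hq
          simp only [Finset.mem_coe, Finset.mem_filter] at hq ⊢
          refine Finset.mem_inter.mpr ⟨hq.2, ?_⟩
          have hqle : q ≤ i + 1 := by
            rcases Finset.mem_union.mp hq.1 with h | h
            · exact Nat.le_succ_of_le (avoidQ_le t μ C i q h)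
            · obtain ⟨a, ha, rfl⟩ := Finset.mem_image.mp h
              exact Nat.succ_le_succ (avoidQ_le t μ C i a ha)
          have := hrow (i + 1) (by omega) hi1
          simp only [Xpart, Finset.mem_image, Finset.mem_range]
          exact ⟨q, by omega, rfl⟩
        · intro a _ b _ hab
          injection hab
      -- B grows by exactly the new column
      have hB : (C ∩ (Finset.range (i + 1 + 1)).biUnion (fun j => Xpart k t ((μ + j) % t))).card =
          (C ∩ Xpart k t ((μ + (i + 1)) % t)).card +
          (C ∩ (Finset.range (i + 1)).biUnion (fun j => Xpart k t ((μ + j) % t))).card := by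
        rw [show Finset.range (i + 1 + 1) = insert (i + 1) (Finset.range (i + 1)) from
          Finset.range_add_one, Finset.biUnion_insert, Finset.inter_union_distrib_left]
        apply Finset.card_union_of_disjoint
        apply Finset.disjoint_of_subset_left (Finset.inter_subset_right)
        apply Finset.disjoint_of_subset_right (Finset.inter_subset_right)
        rw [Finset.disjoint_biUnion_right]
        intro j hj
        exact hXd _ _ (Ne.symm (hcol j (i + 1) (Finset.mem_range.mp hj) (by omega)))
      omega
  -- extract a path
  have hne : (avoidQ t μ C (k - Fsize k t μ)).Nonempty := by
    apply Finset.card_pos.mp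
    have h1 := key (k - Fsize k t μ) le_rfl
    have h2 := hle (k - Fsize k t μ) hM
    omega
  obtain ⟨q, hq⟩ := hne
  obtain ⟨p, hp0, hstep, havoid, -⟩ := avoidQ_path t μ C (k - Fsize k t μ) q hq
  refine ⟨p, ⟨hp0, hstep⟩, havoid, ?_⟩
  rw [Finset.disjoint_left]
  intro x hx hxC
  rcases Finset.mem_union.mp hx with h | h
  · exact (Finset.disjoint_left.mp hdisj hxC) h
  · obtain ⟨i, hi, rfl⟩ := Finset.mem_image.mp h
    simp only [Finset.mem_Icc] at hi
    exact havoid i hi.1 hi.2 hxC
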